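/- arXiv:1909.11982 — 5 statements merged into one kernel-verified Lean document; each statement's English description precedes it below -/
import Mathlib

section
/- For any bipartite graph G with bipartition (X,Y) where |X| = r, |Y| = s and r ≤ s, the product of minimum degrees satisfies δ(G)·δ(G^{bc}) ≤ ⌈r/2⌉·⌊r/2⌋. -/
open SimpleGraph Sum Finset

noncomputable def minDeg {V : Type*} [Fintype V] (G : SimpleGraph V) : ℕ :=
  @SimpleGraph.minDegree V G _ (Classical.decRel _)

/-- Edge-connectivity: minimum size of an edge set whose deletion disconnects
the graph (0 if the graph is disconnected or cannot be disconnected). -/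
noncomputable def edgeConn {V : Type*} [Fintype V] (G : SimpleGraph V) : ℕ :=
  sInf {n | ∃ F : Finset (Sym2 V), F.card = n ∧ ↑F ⊆ G.edgeSet ∧
    ¬ (G.deleteEdges ↑F).Connected}

/-- Vertex-connectivity: minimum size of a vertex set whose removal leaves a
graph which is disconnected or has only one vertex. -/
noncomputable def vertConn {V : Type*} [Fintype V] (G : SimpleGraph V) : ℕ :=
  sInf {n | ∃ S : Finset V, S.card = n ∧
    (¬ (G.induce ((↑S : Set V)ᶜ)).Connected ∨ Nat.card (((↑S : Set V)ᶜ : Set V)) = 1)}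

/-- `G` on `X ⊕ Y` is bipartite with parts `X` and `Y`. -/
def IsBipartition {X Y : Type*} (G : SimpleGraph (X ⊕ Y)) : Prop :=
  ∀ a b, G.Adj a b → (a.isLeft ∧ b.isRight) ∨ (a.isRight ∧ b.isLeft)

/-- Bipartite complement with respect to the bipartition `(X, Y)`. -/
def bipCompl {X Y : Type*} (G : SimpleGraph (X ⊕ Y)) : SimpleGraph (X ⊕ Y) where
  Adj a b := ((a.isLeft ∧ b.isRight) ∨ (a.isRight ∧ b.isLeft)) ∧ ¬ G.Adj a b
  symm := ⟨fun a b h => ⟨h.1.symm.imp And.symm And.symm, fun h' => h.2 h'.symm⟩⟩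
  loopless := ⟨fun a h => by rcases h.1 with ⟨h1, h2⟩ | ⟨h1, h2⟩ <;> cases a <;> simp_all⟩

lemma key (a b : ℕ) : a * b ≤ ((a + b + 1) / 2) * ((a + b) / 2) := by
  obtain ⟨k, hk | hk⟩ := Nat.even_or_odd' (a + b)
  · have e1 : (a + b + 1) / 2 = k := by omega
    have e2 : (a + b) / 2 = k := by omega
    rw [e1, e2]; zify; nlinarith [sq_nonneg ((a : ℤ) - b)]
  · have e1 : (a + b + 1) / 2 = k + 1 := by omega
    have e2 : (a + b) / 2 = k := by omega
    have hab : a ≠ b := by omega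
    have h0 : ((a : ℤ) - b) ≠ 0 := by
      intro h
      apply hab
      omega
    have h1 : 1 ≤ ((a : ℤ) - b) ^ 2 := by
      rcases h0.lt_or_gt with h | h <;> nlinarith
    rw [e1, e2]; zify; nlinarith [h1]

theorem minDeg_prod_bound {X Y : Type*} [Fintype X] [Fintype Y] {r s : ℕ}
    (G : SimpleGraph (X ⊕ Y)) (hbip : IsBipartition G)
    (hr : Fintype.card X = r) (hs : Fintype.card Y = s) (hrs : r ≤ s) :
    minDeg G * minDeg (bipCompl G) ≤ ((r + 1) / 2) * (r / 2) := by
  classical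
  by_cases hY : Nonempty Y
  · obtain ⟨y⟩ := hY
    set v : X ⊕ Y := inr y with hv
    have hdeg : ∀ (H : SimpleGraph (X ⊕ Y)) (hH : ∀ a b, H.Adj a b →
        (a.isLeft ∧ b.isRight) ∨ (a.isRight ∧ b.isLeft)),
        H.degree v = (univ.filter fun x : X => H.Adj v (inl x)).card := by
      intro H hH
      rw [← SimpleGraph.card_neighborFinset_eq_degree]
      have : H.neighborFinset v =
          (univ.filter fun x : X => H.Adj v (inl x)).image inl := by
        ext w
        cases w with
        | inl x => simp [SimpleGraph.mem_neighborFinset]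
        | inr y' =>
          simp only [SimpleGraph.mem_neighborFinset, mem_image, mem_filter]
          constructor
          · intro h; rcases hH _ _ h with ⟨h1, h2⟩ | ⟨h1, h2⟩ <;> simp_all
          · rintro ⟨x, _, h⟩; exact absurd h (by simp)
      rw [this, Finset.card_image_of_injective _ inl_injective]
    have hbc : ∀ a b, (bipCompl G).Adj a b →
        (a.isLeft ∧ b.isRight) ∨ (a.isRight ∧ b.isLeft) := fun a b h => h.1
    have hsum : (univ.filter fun x : X => G.Adj v (inl x)).card +
        (univ.filter fun x : X => (bipCompl G).Adj v (inl x)).card = r := by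
      have heq : (univ.filter fun x : X => (bipCompl G).Adj v (inl x)) =
          (univ.filter fun x : X => ¬ G.Adj v (inl x)) := by
        ext x; simp [bipCompl, hv]
      rw [heq, Finset.card_filter_add_card_filter_not, ← hr]
      exact Finset.card_univ
    have hmd : ∀ (H : SimpleGraph (X ⊕ Y)), minDeg H ≤ H.degree v := by
      intro H
      have := @SimpleGraph.minDegree_le_degree _ H _ (Classical.decRel _) v
      simp only [minDeg]; convert this using 2
    have h1 : minDeg G ≤ (univ.filter fun x : X => G.Adj v (inl x)).card := by
      rw [← hdeg G hbip]; exact hmd G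
    have h2 : minDeg (bipCompl G) ≤
        (univ.filter fun x : X => (bipCompl G).Adj v (inl x)).card := by
      rw [← hdeg (bipCompl G) hbc]; exact hmd (bipCompl G)
    calc minDeg G * minDeg (bipCompl G)
        ≤ (univ.filter fun x : X => G.Adj v (inl x)).card *
          (univ.filter fun x : X => (bipCompl G).Adj v (inl x)).card :=
          Nat.mul_le_mul h1 h2
      _ ≤ ((r + 1) / 2) * (r / 2) := by
          have := key (univ.filter fun x : X => G.Adj v (inl x)).card
            (univ.filter fun x : X => (bipCompl G).Adj v (inl x)).card
          rwa [hsum] at this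
  · have hs0 : s = 0 := by
      rw [← hs, Fintype.card_eq_zero_iff]; exact not_nonempty_iff.mp hY
    have hr0 : r = 0 := by omega
    have hX : IsEmpty X := by
      rw [← Fintype.card_eq_zero_iff]; omega
    have hXY : IsEmpty (X ⊕ Y) := by
      have := not_nonempty_iff.mp hY; infer_instance
    have : minDeg G = 0 := by
      simp [minDeg, SimpleGraph.minDegree, Finset.univ_eq_empty]
    simp [this]
end

section
/- For any bipartite graph G with bipartition (X,Y) where |X| = r, |Y| = s and r ≤ s, the edge-connectivities satisfy κ'(G) + κ'(G^{bc}) ≤ r. -/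
open SimpleGraph Sum

private lemma not_connected_of_isolated {V : Type*} {H : SimpleGraph V} {v w : V}
    (hvw : v ≠ w) (hiso : ∀ u, ¬ H.Adj v u) : ¬ H.Connected := by
  intro hc
  obtain ⟨p⟩ := hc v w
  cases p with
  | nil => exact hvw rfl
  | cons h _ => exact hiso _ h

private lemma edgeConn_le_degree {V : Type*} [Fintype V] [DecidableEq V]
    (H : SimpleGraph V) [DecidableRel H.Adj] {v w : V} (hvw : v ≠ w) :
    edgeConn H ≤ H.degree v := by
  apply Nat.sInf_le
  refine ⟨H.incidenceFinset v, H.card_incidenceFinset_eq_degree v, ?_, ?_⟩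
  · intro e he
    rw [Finset.mem_coe, SimpleGraph.mem_incidenceFinset] at he
    exact H.incidenceSet_subset v he
  · apply not_connected_of_isolated hvw
    intro u hu
    rw [SimpleGraph.deleteEdges_adj] at hu
    exact hu.2 (by
      rw [Finset.mem_coe, SimpleGraph.mem_incidenceFinset,
        SimpleGraph.mk'_mem_incidenceSet_left_iff]
      exact hu.1)

private lemma edgeConn_eq_zero_of_not_connected {V : Type*} [Fintype V] {H : SimpleGraph V}
    (h : ¬ H.Connected) : edgeConn H = 0 :=
  Nat.sInf_eq_zero.2 (Or.inl ⟨∅, by simp, by simp, by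
    simpa [SimpleGraph.deleteEdges_empty] using h⟩)

private lemma edgeConn_eq_zero_of_edgeless {V : Type*} [Fintype V] {H : SimpleGraph V}
    (h : ∀ a b, ¬ H.Adj a b) : edgeConn H = 0 := by
  by_cases hc : H.Connected
  · rw [edgeConn]
    convert Nat.sInf_empty
    rw [Set.eq_empty_iff_forall_notMem]
    rintro n ⟨F, hF, hsub, hnc⟩
    have hFe : F = ∅ := by
      rw [Finset.eq_empty_iff_forall_notMem]
      intro e he
      have := hsub (Finset.mem_coe.2 he)
      induction e with
      | h a b => exact h a b this
    apply hnc
    rw [hFe]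
    simpa [SimpleGraph.deleteEdges_empty] using hc
  · exact edgeConn_eq_zero_of_not_connected hc

private lemma degree_sum_eq {X Y : Type*} [Fintype X] [Fintype Y]
    (G : SimpleGraph (X ⊕ Y)) [DecidableRel G.Adj] [DecidableRel (bipCompl G).Adj]
    (hbip : IsBipartition G) (y : Y) :
    G.degree (inr y) + (bipCompl G).degree (inr y) = Fintype.card X := by
  classical
  rw [← SimpleGraph.card_neighborFinset_eq_degree, ← SimpleGraph.card_neighborFinset_eq_degree]
  have hdisj : Disjoint (G.neighborFinset (inr y)) ((bipCompl G).neighborFinset (inr y)) := by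
    rw [Finset.disjoint_left]
    intro a ha hb
    rw [SimpleGraph.mem_neighborFinset] at ha hb
    exact hb.2 ha
  rw [← Finset.card_union_of_disjoint hdisj]
  have hunion : G.neighborFinset (inr y) ∪ (bipCompl G).neighborFinset (inr y)
      = Finset.univ.image (inl : X → X ⊕ Y) := by
    ext a
    simp only [Finset.mem_union, SimpleGraph.mem_neighborFinset, Finset.mem_image,
      Finset.mem_univ, true_and]
    constructor
    · rintro (h | h)
      · rcases hbip _ _ h with ⟨h1, _⟩ | ⟨_, h2⟩
        · simp at h1
        · cases a with
          | inl x => exact ⟨x, rfl⟩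
          | inr _ => simp at h2
      · rcases h.1 with ⟨h1, _⟩ | ⟨_, h2⟩
        · simp at h1
        · cases a with
          | inl x => exact ⟨x, rfl⟩
          | inr _ => simp at h2
    · rintro ⟨x, rfl⟩
      by_cases h : G.Adj (inr y) (inl x)
      · exact Or.inl h
      · exact Or.inr ⟨Or.inr ⟨rfl, rfl⟩, h⟩
  rw [hunion, Finset.card_image_of_injective _ Sum.inl_injective, Finset.card_univ]

theorem edgeConn_sum_bound {X Y : Type*} [Fintype X] [Fintype Y] {r s : ℕ}
    (G : SimpleGraph (X ⊕ Y)) (hbip : IsBipartition G)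
    (hr : Fintype.card X = r) (hs : Fintype.card Y = s) (hrs : r ≤ s) :
    edgeConn G + edgeConn (bipCompl G) ≤ r := by
  classical
  cases isEmpty_or_nonempty X with
  | inl hX =>
    -- r = 0, both graphs edgeless
    have hedgeless : ∀ a b : X ⊕ Y, ¬ G.Adj a b := by
      intro a b hab
      rcases hbip _ _ hab with ⟨h1, _⟩ | ⟨_, h2⟩
      · cases a with
        | inl x => exact hX.false x
        | inr _ => simp at h1
      · cases b with
        | inl x => exact hX.false x
        | inr _ => simp at h2
    have hedgeless' : ∀ a b : X ⊕ Y, ¬ (bipCompl G).Adj a b := by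
      intro a b hab
      rcases hab.1 with ⟨h1, _⟩ | ⟨_, h2⟩
      · cases a with
        | inl x => exact hX.false x
        | inr _ => simp at h1
      · cases b with
        | inl x => exact hX.false x
        | inr _ => simp at h2
    rw [edgeConn_eq_zero_of_edgeless hedgeless, edgeConn_eq_zero_of_edgeless hedgeless']
    exact Nat.zero_le r
  | inr hX =>
    have hY : Nonempty Y := by
      have : 0 < r := hr ▸ Fintype.card_pos
      exact Fintype.card_pos_iff.1 (hs ▸ lt_of_lt_of_le this hrs)
    obtain ⟨x⟩ := hX
    obtain ⟨y⟩ := hY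
    have hne : (inr y : X ⊕ Y) ≠ inl x := by simp
    have h1 := edgeConn_le_degree G (w := inl x) hne
    have h2 := edgeConn_le_degree (bipCompl G) (w := inl x) hne
    calc edgeConn G + edgeConn (bipCompl G)
        ≤ G.degree (inr y) + (bipCompl G).degree (inr y) := Nat.add_le_add h1 h2
      _ = Fintype.card X := degree_sum_eq G hbip y
      _ = r := hr
end

section
/- For any bipartite graph G with bipartition (X,Y) where |X| = r, |Y| = s and r ≤ s, the vertex-connectivities satisfy κ(G) + κ(G^{bc}) ≤ r and κ(G)·κ(G^{bc}) ≤ ⌈r/2⌉·⌊r/2⌋. -/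
open SimpleGraph Sum

lemma vertConn_le_degree {V : Type*} [Fintype V] (H : SimpleGraph V)
    [DecidableRel H.Adj] (v : V) : vertConn H ≤ H.degree v := by
  apply Nat.sInf_le
  refine ⟨H.neighborFinset v, rfl, ?_⟩
  set T : Set V := (↑(H.neighborFinset v))ᶜ with hT
  have hvT : v ∈ T := by simp [hT]
  by_cases hw : ∃ w ∈ T, w ≠ v
  · left
    intro hconn
    obtain ⟨w, hwT, hwv⟩ := hw
    obtain ⟨p⟩ := hconn.preconnected ⟨v, hvT⟩ ⟨w, hwT⟩
    cases p with
    | nil => exact hwv rfl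
    | @cons _ m _ h p =>
      have hadj : H.Adj v ↑m := h
      have hm : (↑m : V) ∉ (↑(H.neighborFinset v) : Set V) := m.2
      exact hm (by simpa using hadj)
  · right
    push_neg at hw
    have : T = {v} := by
      ext x
      simp only [Set.mem_singleton_iff]
      exact ⟨fun hx => hw x hx, fun hx => hx ▸ hvT⟩
    rw [this]
    simp

lemma degree_bipCompl {X Y : Type*} [Fintype X] [Fintype Y]
    (G : SimpleGraph (X ⊕ Y)) (hbip : IsBipartition G) [DecidableRel G.Adj]
    [DecidableRel (bipCompl G).Adj] (y : Y) :
    G.degree (inr y) ≤ Fintype.card X ∧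
    (bipCompl G).degree (inr y) = Fintype.card X - G.degree (inr y) := by
  classical
  have hsub : G.neighborFinset (inr y) ⊆ Finset.univ.image (inl : X → X ⊕ Y) := by
    intro b hb
    rw [SimpleGraph.mem_neighborFinset] at hb
    rcases hbip _ _ hb with ⟨h1, _⟩ | ⟨_, h2⟩
    · simp at h1
    · rcases b with x | y'
      · simp
      · simp at h2
  have himg : (Finset.univ.image (inl : X → X ⊕ Y)).card = Fintype.card X := by
    rw [Finset.card_image_of_injective _ inl_injective, Finset.card_univ]
  have hset : (bipCompl G).neighborFinset (inr y) =
      Finset.univ.image (inl : X → X ⊕ Y) \ G.neighborFinset (inr y) := by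
    ext b
    rw [SimpleGraph.mem_neighborFinset, Finset.mem_sdiff, SimpleGraph.mem_neighborFinset]
    constructor
    · rintro ⟨h1 | h1, h2⟩
      · simp at h1
      · rcases b with x | y'
        · exact ⟨by simp, h2⟩
        · simp at h1
    · rintro ⟨hb, h2⟩
      simp only [Finset.mem_image] at hb
      obtain ⟨x, _, rfl⟩ := hb
      exact ⟨Or.inr ⟨by simp, by simp⟩, h2⟩
  constructor
  · rw [SimpleGraph.degree, ← himg]
    exact Finset.card_le_card hsub
  · rw [SimpleGraph.degree, SimpleGraph.degree, hset, Finset.card_sdiff_of_subset hsub, himg]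

lemma arith_half (a r : ℕ) (h : a ≤ r) : a * (r - a) ≤ ((r + 1) / 2) * (r / 2) := by
  rcases Nat.even_or_odd r with ⟨k, hk⟩ | ⟨k, hk⟩
  · have h1 : (r + 1) / 2 = k := by omega
    have h2 : r / 2 = k := by omega
    rw [h1, h2]
    subst hk
    zify [h]
    nlinarith [sq_nonneg ((k : ℤ) - a)]
  · have h1 : (r + 1) / 2 = k + 1 := by omega
    have h2 : r / 2 = k := by omega
    rw [h1, h2]
    subst hk
    zify [h]
    nlinarith [mul_self_nonneg ((a : ℤ) - k - 1), mul_self_nonneg ((a : ℤ) - k)]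

theorem vertConn_sum_and_prod_bound {X Y : Type*} [Fintype X] [Fintype Y] {r s : ℕ}
    (G : SimpleGraph (X ⊕ Y)) (hbip : IsBipartition G)
    (hr : Fintype.card X = r) (hs : Fintype.card Y = s) (hrs : r ≤ s) :
    vertConn G + vertConn (bipCompl G) ≤ r ∧
    vertConn G * vertConn (bipCompl G) ≤ ((r + 1) / 2) * (r / 2) := by
  classical
  rcases isEmpty_or_nonempty Y with hY | hne
  swap
  obtain ⟨y⟩ := hne
  rotate_left
  · have hs0 : s = 0 := by rw [← hs]; exact Fintype.card_eq_zero
    have hr0 : r = 0 := by omega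
    have hX : IsEmpty X := by
      rw [← Fintype.card_eq_zero_iff]; omega
    have hV : IsEmpty (X ⊕ Y) := by infer_instance
    have hzero : ∀ H : SimpleGraph (X ⊕ Y), vertConn H = 0 := by
      intro H
      apply Nat.le_zero.mp
      apply Nat.sInf_le
      refine ⟨∅, Finset.card_empty, Or.inl fun hc => ?_⟩
      obtain ⟨⟨v, _⟩⟩ := hc.nonempty
      exact hV.false v
    rw [hzero G, hzero (bipCompl G)]
    simp [hr0]
  · have h1 : vertConn G ≤ G.degree (inr y) := vertConn_le_degree G (inr y)
    have h2 : vertConn (bipCompl G) ≤ (bipCompl G).degree (inr y) :=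
      vertConn_le_degree (bipCompl G) (inr y)
    obtain ⟨hd1, hd2⟩ := degree_bipCompl G hbip y
    rw [hr] at hd1 hd2
    constructor
    · omega
    · calc vertConn G * vertConn (bipCompl G)
          ≤ G.degree (inr y) * (r - G.degree (inr y)) := by
            rw [← hd2]; exact Nat.mul_le_mul h1 h2
        _ ≤ ((r + 1) / 2) * (r / 2) := arith_half _ _ hd1
end

section
/- Let G be a bipartite graph with bipartition (X,Y), |X| = r ≤ s = |Y|, n = r + s vertices and m ≥ n edges with m not divisible by s. Then κ'(G) + κ'(G^{bc}) ≤ r − 1. -/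
open SimpleGraph Sum

open Finset

/-- Deleting all edges at `v` isolates `v`, so the edge connectivity is at most
the degree of `v`, provided there is another vertex. -/
lemma edgeConn_le_degree_aux {V : Type*} [Fintype V] [DecidableEq V] (G : SimpleGraph V)
    [DecidableRel G.Adj] (v w : V) (hvw : v ≠ w) : edgeConn G ≤ G.degree v := by
  apply Nat.sInf_le
  refine ⟨G.incidenceFinset v, G.card_incidenceFinset_eq_degree v, ?_, ?_⟩
  · intro e he
    simp only [Finset.mem_coe, mem_incidenceFinset] at he
    exact he.1
  · intro hc
    obtain ⟨p⟩ := hc.preconnected v w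
    cases p with
    | nil => exact hvw rfl
    | cons h q =>
      rw [SimpleGraph.deleteEdges_adj] at h
      refine h.2 ?_
      simp only [Finset.mem_coe, mem_incidenceFinset]
      exact ⟨h.1, Sym2.mem_mk_left _ _⟩

lemma degree_inr_eq {X Y : Type*} [Fintype X] [Fintype Y] [DecidableEq X] [DecidableEq Y]
    (G : SimpleGraph (X ⊕ Y)) [DecidableRel G.Adj] (hbip : IsBipartition G) (y : Y) :
    G.degree (inr y) = (univ.filter fun x : X => G.Adj (inl x) (inr y)).card := by
  rw [← SimpleGraph.card_neighborFinset_eq_degree]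
  rw [show G.neighborFinset (inr y) =
      (univ.filter fun x : X => G.Adj (inl x) (inr y)).image inl by
    ext a
    cases a with
    | inl x => simp [SimpleGraph.adj_comm]
    | inr y' =>
      simp only [SimpleGraph.mem_neighborFinset, Finset.mem_image, Finset.mem_filter]
      constructor
      · intro h; rcases hbip _ _ h with ⟨h1, _⟩ | ⟨_, h2⟩ <;> simp_all
      · rintro ⟨x, _, h⟩; exact absurd h (by simp)]
  exact Finset.card_image_of_injective _ inl_injective

lemma sum_degree_inr {X Y : Type*} [Fintype X] [Fintype Y] [DecidableEq X] [DecidableEq Y]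
    (G : SimpleGraph (X ⊕ Y)) [DecidableRel G.Adj] (hbip : IsBipartition G) :
    ∑ y : Y, (univ.filter fun x : X => G.Adj (inl x) (inr y)).card = G.edgeFinset.card := by
  classical
  set P : Finset (X × Y) := univ.filter (fun p : X × Y => G.Adj (inl p.1) (inr p.2)) with hP
  have h1 : P.card = ∑ y : Y, (univ.filter fun x : X => G.Adj (inl x) (inr y)).card := by
    rw [Finset.card_eq_sum_card_fiberwise (f := Prod.snd) (t := univ) (fun p _ => mem_univ _)]
    refine Finset.sum_congr rfl fun y _ => ?_
    refine Finset.card_bij' (fun p _ => p.1) (fun x _ => (x, y)) ?_ ?_ ?_ ?_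
    · rintro ⟨x, y'⟩ hp
      simp only [hP, Finset.mem_filter, mem_univ, true_and] at hp ⊢
      obtain ⟨h, rfl⟩ := hp
      exact h
    · intro x hx
      simp only [Finset.mem_filter, mem_univ, true_and] at hx
      simp [hP, hx]
    · rintro ⟨x, y'⟩ hp
      simp only [hP, Finset.mem_filter, mem_univ, true_and] at hp
      simp [hp.2]
    · intro x hx; rfl
  rw [← h1]
  refine Finset.card_bij (fun p _ => s(inl p.1, inr p.2)) ?_ ?_ ?_
  · rintro ⟨x, y⟩ hp
    simp only [hP, Finset.mem_filter, mem_univ, true_and] at hp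
    simpa [SimpleGraph.mem_edgeFinset] using hp
  · rintro ⟨x, y⟩ hp ⟨x', y'⟩ hp' h
    rw [Sym2.eq_iff] at h
    rcases h with ⟨h1, h2⟩ | ⟨h1, h2⟩
    · simp only [inl.injEq, inr.injEq] at h1 h2
      simp [h1, h2]
    · exact absurd h1 (by simp)
  · intro e he
    induction e with
    | h a b =>
      rw [SimpleGraph.mem_edgeFinset, SimpleGraph.mem_edgeSet] at he
      rcases hbip _ _ he with ⟨h1, h2⟩ | ⟨h1, h2⟩
      · cases a with
        | inl x =>
          cases b with
          | inl y => simp at h2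
          | inr y => exact ⟨(x, y), by simp [hP, he], rfl⟩
        | inr y => simp at h1
      · cases a with
        | inl x => simp at h1
        | inr y =>
          cases b with
          | inl x => exact ⟨(x, y), by simp [hP, he.symm], Sym2.eq_swap⟩
          | inr y' => simp at h2

lemma bipCompl_isBipartition {X Y : Type*} (G : SimpleGraph (X ⊕ Y)) :
    IsBipartition (bipCompl G) := fun _ _ h => h.1

theorem edgeConn_sum_le_sub_one_not_dvd {X Y : Type*} [Fintype X] [Fintype Y] {r s m : ℕ}
    (G : SimpleGraph (X ⊕ Y)) (hbip : IsBipartition G)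
    (hr : Fintype.card X = r) (hs : Fintype.card Y = s) (hrs : r ≤ s)
    (hm : G.edgeSet.ncard = m) (hm1 : r + s ≤ m) (hm2 : ¬ s ∣ m) :
    edgeConn G + edgeConn (bipCompl G) ≤ r - 1 := by
  classical
  subst hr hs
  have hmcard : m = G.edgeFinset.card := by
    rw [← hm, ← SimpleGraph.coe_edgeFinset, Set.ncard_coe_finset]
  -- X and Y are nonempty
  have hX : Nonempty X := by
    by_contra h
    rw [not_nonempty_iff] at h
    refine hm2 ⟨0, ?_⟩
    rw [hmcard, Nat.mul_zero, Finset.card_eq_zero]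
    ext e
    induction e with
    | h a b =>
      simp only [SimpleGraph.mem_edgeFinset, SimpleGraph.mem_edgeSet, Finset.notMem_empty,
        iff_false]
      intro hadj
      rcases hbip _ _ hadj with ⟨h1, _⟩ | ⟨_, h2⟩
      · cases a with
        | inl x => exact h.elim x
        | inr y => simp at h1
      · cases b with
        | inl x => exact h.elim x
        | inr y => simp at h2
  have hY : Nonempty Y := by
    by_contra h
    rw [not_nonempty_iff] at h
    refine hm2 ⟨0, ?_⟩
    rw [hmcard, Nat.mul_zero, Finset.card_eq_zero]
    ext e
    induction e with
    | h a b =>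
      simp only [SimpleGraph.mem_edgeFinset, SimpleGraph.mem_edgeSet, Finset.notMem_empty,
        iff_false]
      intro hadj
      rcases hbip _ _ hadj with ⟨_, h2⟩ | ⟨h1, _⟩
      · cases b with
        | inl x => simp at h2
        | inr y => exact h.elim y
      · cases a with
        | inl x => simp at h1
        | inr y => exact h.elim y
  set r := Fintype.card X with hrdef
  set s := Fintype.card Y with hsdef
  have hs0 : 0 < s := Fintype.card_pos
  set d := m / s with hd
  have hmod : s * d + m % s = m := Nat.div_add_mod m s
  have hmodpos : 0 < m % s := Nat.pos_of_ne_zero fun h => hm2 (Nat.dvd_of_mod_eq_zero h)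
  have hmodlt : m % s < s := Nat.mod_lt _ hs0
  -- degree function on Y
  set f : Y → ℕ := fun y => (univ.filter fun x : X => G.Adj (inl x) (inr y)).card with hf
  have hsum : ∑ y : Y, f y = m := by rw [hmcard]; exact sum_degree_inr G hbip
  -- there is y₁ with f y₁ ≤ d
  obtain ⟨y₁, hy₁⟩ : ∃ y : Y, f y ≤ d := by
    by_contra h
    push_neg at h
    have : s * (d + 1) ≤ ∑ y : Y, f y := by
      calc s * (d + 1) = ∑ _y : Y, (d + 1) := by
            rw [Finset.sum_const, smul_eq_mul, Finset.card_univ]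
      _ ≤ ∑ y : Y, f y := Finset.sum_le_sum fun y _ => h y
    rw [hsum] at this
    have h2 : s * (d + 1) = s * d + s := by ring
    omega
  -- there is y₂ with d + 1 ≤ f y₂
  obtain ⟨y₂, hy₂⟩ : ∃ y : Y, d + 1 ≤ f y := by
    by_contra h
    push_neg at h
    have : ∑ y : Y, f y ≤ s * d := by
      calc ∑ y : Y, f y ≤ ∑ _y : Y, d := Finset.sum_le_sum fun y _ => Nat.lt_succ_iff.mp (h y)
      _ = s * d := by rw [Finset.sum_const, smul_eq_mul, Finset.card_univ]
    rw [hsum] at this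
    omega
  obtain ⟨x₀⟩ := hX
  -- first bound: edgeConn G ≤ d
  have hb1 : edgeConn G ≤ d := by
    have := edgeConn_le_degree_aux G (inr y₁) (inl x₀) (by simp)
    rw [degree_inr_eq G hbip y₁] at this
    exact this.trans hy₁
  -- f y₂ ≤ r and bipCompl degree
  have hfy₂r : f y₂ ≤ r := by
    have := Finset.card_filter_le (univ : Finset X) (fun x : X => G.Adj (inl x) (inr y₂))
    simpa [hf, hrdef] using this
  have hb2 : edgeConn (bipCompl G) ≤ r - f y₂ := by
    have h1 := edgeConn_le_degree_aux (bipCompl G) (inr y₂) (inl x₀) (by simp)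
    rw [degree_inr_eq (bipCompl G) (bipCompl_isBipartition G) y₂] at h1
    have h2 : (univ.filter fun x : X => (bipCompl G).Adj (inl x) (inr y₂)) =
        univ.filter fun x : X => ¬ G.Adj (inl x) (inr y₂) := by
      refine Finset.filter_congr fun x _ => ?_
      simp [bipCompl]
    rw [h2] at h1
    have h3 : (univ.filter fun x : X => ¬ G.Adj (inl x) (inr y₂)).card = r - f y₂ := by
      have h4 := Finset.card_filter_add_card_filter_not
        (s := (univ : Finset X)) (p := fun x : X => G.Adj (inl x) (inr y₂))
      have h5 : (univ.filter fun x : X => G.Adj (inl x) (inr y₂)).card = f y₂ := rfl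
      have h6 : (univ : Finset X).card = r := by rw [Finset.card_univ]
      omega
    rw [h3] at h1
    exact h1
  have hdr : d + 1 ≤ r := hy₂.trans hfy₂r
  exact le_trans (Nat.add_le_add hb1 hb2) (by omega)
end

section
/- Let G be a bipartite graph with bipartition (X,Y), |X| = r ≤ s = |Y|, and m ≥ n = r + s edges with m = ds + l, 1 ≤ l ≤ s − 1. Then κ'(G)·κ'(G^{bc}) ≤ ⌊m/s⌋·(r − 1 − ⌊m/s⌋). -/
open SimpleGraph Sum

lemma edgeConn_le_degree' {V : Type*} [Fintype V] (G : SimpleGraph V) [DecidableRel G.Adj]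
    [DecidableEq V] (v : V) (h2 : 1 < Fintype.card V) : edgeConn G ≤ G.degree v := by
  apply Nat.sInf_le
  refine ⟨G.incidenceFinset v, G.card_incidenceFinset_eq_degree v, ?_, ?_⟩
  · intro e he
    simp only [Finset.mem_coe, mem_incidenceFinset] at he
    exact G.incidenceSet_subset v he
  · obtain ⟨u, hu⟩ := Fintype.exists_ne_of_one_lt_card h2 v
    intro hc
    obtain ⟨p⟩ := hc.preconnected v u
    cases p with
    | nil => exact hu rfl
    | cons h _ =>
      rw [deleteEdges_adj] at h
      exact h.2 (by simp [mem_incidenceFinset, incidenceSet, h.1])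

lemma degree_inr' {X Y : Type*} [Fintype X] [Fintype Y] (G : SimpleGraph (X ⊕ Y))
    [DecidableRel G.Adj] (hbip : IsBipartition G) (y : Y) :
    G.degree (inr y) = (Finset.univ.filter fun x : X => G.Adj (inr y) (inl x)).card := by
  classical
  rw [← card_neighborFinset_eq_degree,
    show G.neighborFinset (inr y) = Finset.univ.filter (G.Adj (inr y)) from by
      ext a; simp [neighborFinset]]
  rw [Finset.card_filter, Finset.card_filter, Fintype.sum_sum_type]
  have h2 : ∑ y' : Y, (if G.Adj (inr y) (inr y') then 1 else 0) = 0 := by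
    refine Finset.sum_eq_zero fun y' _ => ?_
    rw [if_neg]
    intro h
    rcases hbip _ _ h with ⟨h1, -⟩ | ⟨-, h1⟩ <;> simp at h1
  rw [h2, add_zero]

lemma degree_inl' {X Y : Type*} [Fintype X] [Fintype Y] (G : SimpleGraph (X ⊕ Y))
    [DecidableRel G.Adj] (hbip : IsBipartition G) (x : X) :
    G.degree (inl x) = (Finset.univ.filter fun y : Y => G.Adj (inl x) (inr y)).card := by
  classical
  rw [← card_neighborFinset_eq_degree,
    show G.neighborFinset (inl x) = Finset.univ.filter (G.Adj (inl x)) from by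
      ext a; simp [neighborFinset]]
  rw [Finset.card_filter, Finset.card_filter, Fintype.sum_sum_type]
  have h2 : ∑ x' : X, (if G.Adj (inl x) (inl x') then 1 else 0) = 0 := by
    refine Finset.sum_eq_zero fun x' _ => ?_
    rw [if_neg]
    intro h
    rcases hbip _ _ h with ⟨-, h1⟩ | ⟨h1, -⟩ <;> simp at h1
  rw [h2, zero_add]

lemma edge_count' {X Y : Type*} [Fintype X] [Fintype Y] (G : SimpleGraph (X ⊕ Y))
    [DecidableRel G.Adj] (hbip : IsBipartition G) :
    G.edgeSet.ncard = ∑ y : Y, G.degree (inr y) := by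
  have hsum := G.sum_degrees_eq_twice_card_edges
  rw [Fintype.sum_sum_type] at hsum
  have hXY : ∑ x : X, G.degree (inl x) = ∑ y : Y, G.degree (inr y) := by
    simp only [degree_inl' G hbip, degree_inr' G hbip, Finset.card_filter]
    rw [Finset.sum_comm]
    exact Finset.sum_congr rfl fun y _ => Finset.sum_congr rfl fun x _ =>
      if_congr (G.adj_comm _ _) rfl rfl
  rw [hXY, ← two_mul] at hsum
  have hn : G.edgeSet.ncard = G.edgeFinset.card := Set.ncard_eq_toFinset_card' _
  omega

theorem edgeConn_prod_le_of_not_dvd {X Y : Type*} [Fintype X] [Fintype Y] {r s m d l : ℕ}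
    (G : SimpleGraph (X ⊕ Y)) (hbip : IsBipartition G)
    (hr : Fintype.card X = r) (hs : Fintype.card Y = s) (hrs : r ≤ s)
    (hm : G.edgeSet.ncard = m) (hm1 : r + s ≤ m)
    (hdl : m = d * s + l) (hl1 : 1 ≤ l) (hl2 : l < s) :
    edgeConn G * edgeConn (bipCompl G) ≤ d * (r - 1 - d) := by
  letI : DecidableEq X := Classical.decEq _
  letI : DecidableEq (X ⊕ Y) := Classical.decEq _
  letI instG : DecidableRel G.Adj := Classical.decRel _
  letI instB : DecidableRel (bipCompl G).Adj := Classical.decRel _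
  have hcard : 1 < Fintype.card (X ⊕ Y) := by
    rw [Fintype.card_sum, hr, hs]; omega
  have hcount : m = ∑ y : Y, G.degree (inr y) := by
    rw [← hm, edge_count' G hbip]
  have h1 : ∃ y : Y, G.degree (inr y) ≤ d := by
    by_contra h
    push_neg at h
    have h' : ∑ _y : Y, (d + 1) ≤ ∑ y : Y, G.degree (inr y) :=
      Finset.sum_le_sum fun y _ => h y
    rw [Finset.sum_const, Finset.card_univ, hs, smul_eq_mul, mul_comm, add_one_mul] at h'
    omega
  have h2 : ∃ y : Y, d + 1 ≤ G.degree (inr y) := by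
    by_contra h
    push_neg at h
    have h' : ∑ y : Y, G.degree (inr y) ≤ ∑ _y : Y, d :=
      Finset.sum_le_sum fun y _ => by have := h y; omega
    rw [Finset.sum_const, Finset.card_univ, hs, smul_eq_mul, mul_comm] at h'
    omega
  obtain ⟨y1, hy1⟩ := h1
  obtain ⟨y2, hy2⟩ := h2
  have hbipc : IsBipartition (bipCompl G) := fun a b h => h.1
  have hdegG : G.degree (inr y2) ≤ r := by
    rw [degree_inr' G hbip]
    calc _ ≤ Finset.univ.card := Finset.card_filter_le _ _
    _ = r := by rw [Finset.card_univ, hr]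
  have hdeg2 : (bipCompl G).degree (inr y2) ≤ r - 1 - d := by
    rw [degree_inr' _ hbipc]
    have hcompl : (Finset.univ.filter fun x : X => (bipCompl G).Adj (inr y2) (inl x))
        = (Finset.univ.filter fun x : X => G.Adj (inr y2) (inl x))ᶜ := by
      ext x
      simp [bipCompl]
    rw [hcompl, Finset.card_compl, hr, ← degree_inr' G hbip]
    omega
  calc edgeConn G * edgeConn (bipCompl G)
      ≤ G.degree (inr y1) * (bipCompl G).degree (inr y2) :=
        Nat.mul_le_mul (edgeConn_le_degree' G (inr y1) hcard)
          (edgeConn_le_degree' (bipCompl G) (inr y2) hcard)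
    _ ≤ d * (r - 1 - d) := Nat.mul_le_mul hy1 hdeg2
end
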